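/- Every residually torsion-free nilpotent group is bi-orderable. -/

import Mathlib

universe u

theorem tri_of_or {α : Type*} {p q : Prop} {x y : α} (h : p ∨ x = y ∨ q) : ¬p → ¬q → x = y :=
  fun h1 h2 => (h.resolve_left h1).resolve_right h2

theorem or_of_tri {α : Type*} {r : α → α → Prop} (h : ∀ a b, ¬r a b → ¬r b a → a = b) (a b : α) :
    r a b ∨ a = b ∨ r b a := by
  by_cases h1 : r a b
  · exact Or.inl h1
  · by_cases h2 : r b a
    · exact Or.inr (Or.inr h2)
    · exact Or.inr (Or.inl (h a b h1 h2))

/-- A group is bi-orderable if it admits a strict total order invariant under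
both left and right multiplication. -/
def BiOrderable (G : Type*) [Group G] : Prop :=
  ∃ r : G → G → Prop, IsStrictTotalOrder G r ∧
    (∀ f g h : G, r g h → r (f * g) (f * h)) ∧
    (∀ f g h : G, r g h → r (g * f) (h * f))

theorem BiOrderable.comap {G H : Type*} [Group G] [Group H] (f : G →* H)
    (hf : Function.Injective f) (hH : BiOrderable H) : BiOrderable G := by
  obtain ⟨r, hsto, hl, hr⟩ := hH
  refine ⟨fun a b => r (f a) (f b),
    { trichotomous := ?_, irrefl := ?_, trans := ?_ }, ?_, ?_⟩
  · intro a b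
    refine tri_of_or ?_
    rcases or_of_tri hsto.trichotomous (f a) (f b) with h | h | h
    · exact Or.inl h
    · exact Or.inr (Or.inl (hf h))
    · exact Or.inr (Or.inr h)
  · exact fun a => hsto.irrefl (f a)
  · exact fun a b c hab hbc => hsto.trans _ _ _ hab hbc
  · intro a b c hbc; simpa using hl (f a) (f b) (f c) hbc
  · intro a b c hbc; simpa using hr (f a) (f b) (f c) hbc

theorem BiOrderable.pi {ι : Type*} {H : ι → Type*} [∀ i, Group (H i)]
    (hH : ∀ i, BiOrderable (H i)) : BiOrderable (∀ i, H i) := by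
  classical
  choose r hsto hl hr using hH
  set w : ι → ι → Prop := WellOrderingRel with hw
  haveI : IsWellOrder ι w := WellOrderingRel.isWellOrder
  refine ⟨fun f g => ∃ i, r i (f i) (g i) ∧ ∀ j, w j i → f j = g j,
    { trichotomous := ?_, irrefl := ?_, trans := ?_ }, ?_, ?_⟩
  · intro f g
    refine tri_of_or ?_
    by_cases hfg : f = g
    · exact Or.inr (Or.inl hfg)
    · have hne : {i | f i ≠ g i}.Nonempty := by
        by_contra hcon
        exact hfg (funext fun i => by
          by_contra hi
          exact hcon ⟨i, hi⟩)
      obtain ⟨i, hi, hmin⟩ := (IsWellFounded.wf (r := w)).has_min _ hne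
      have hagree : ∀ j, w j i → f j = g j := fun j hj => by
        by_contra hj'
        exact hmin j hj' hj
      rcases or_of_tri (hsto i).trichotomous (f i) (g i) with h | h | h
      · exact Or.inl ⟨i, h, hagree⟩
      · exact absurd h hi
      · exact Or.inr (Or.inr ⟨i, h, fun j hj => (hagree j hj).symm⟩)
  · rintro f ⟨i, hi, -⟩
    exact (hsto i).irrefl _ hi
  · rintro f g k ⟨i, hi, hia⟩ ⟨j, hj, hja⟩
    rcases (trichotomous_of w i j) with hij | rfl | hji
    · refine ⟨i, ?_, fun l hl => (hia l hl).trans (hja l (IsTrans.trans _ _ _ hl hij))⟩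
      rw [hja i hij] at hi; exact hi
    · exact ⟨i, (hsto i).trans _ _ _ hi hj, fun l hl => (hia l hl).trans (hja l hl)⟩
    · refine ⟨j, ?_, fun l hl => (hia l (IsTrans.trans _ _ _ hl hji)).trans (hja l hl)⟩
      rw [← hia j hji] at hj; exact hj
  · rintro a f g ⟨i, hi, hia⟩
    exact ⟨i, hl i _ _ _ hi, fun j hj => by simp [hia j hj]⟩
  · rintro a f g ⟨i, hi, hia⟩
    exact ⟨i, hr i _ _ _ hi, fun j hj => by simp [hia j hj]⟩

theorem BiOrderable.of_comm_torsionFree {G : Type*} [CommGroup G]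
    (htf : ∀ g : G, ∀ n : ℕ, n ≠ 0 → g ^ n = 1 → g = 1) : BiOrderable G := by
  classical
  set Cone : Set G → Prop := fun P => (1 : G) ∉ P ∧ ∀ a ∈ P, ∀ b ∈ P, a * b ∈ P with hCone
  have hchains : ∀ c ⊆ {P | Cone P}, IsChain (· ⊆ ·) c → ∃ ub ∈ {P | Cone P}, ∀ s ∈ c, s ⊆ ub := by
    intro c hc hchain
    refine ⟨⋃₀ c, ⟨?_, ?_⟩, fun s hs => Set.subset_sUnion_of_mem hs⟩
    · rintro ⟨S, hS, h1⟩
      exact (hc hS).1 h1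
    · rintro a ⟨S, hS, ha⟩ b ⟨T, hT, hb⟩
      rcases hchain.total hS hT with h | h
      · exact ⟨T, hT, (hc hT).2 a (h ha) b hb⟩
      · exact ⟨S, hS, (hc hS).2 a ha b (h hb)⟩
  obtain ⟨P, hP, hPmax⟩ : ∃ P, Cone P ∧ ∀ Q, Cone Q → P ⊆ Q → Q = P := by
    obtain ⟨m, hm⟩ := zorn_subset {P | Cone P} hchains
    exact ⟨m, hm.1, fun Q hQ hsub => Set.Subset.antisymm (hm.2 hQ hsub) hsub⟩
  have hpow : ∀ p ∈ P, ∀ n : ℕ, p ^ (n + 1) ∈ P := by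
    intro p hp n
    induction n with
    | zero => simpa using hp
    | succ n ih => rw [pow_succ]; exact hP.2 _ ih _ hp
  have key : ∀ g : G, g ≠ 1 → g ∉ P → ∃ n : ℕ, (g⁻¹) ^ (n + 1) ∈ P := by
    intro g hg1 hgP
    set Q : Set G := {x | (∃ p ∈ P, ∃ n : ℕ, x = p * g ^ n) ∨ ∃ n : ℕ, x = g ^ (n + 1)} with hQ
    by_cases h1Q : (1 : G) ∈ Q
    · rcases h1Q with ⟨p, hp, n, hn⟩ | ⟨n, hn⟩
      · rcases Nat.eq_zero_or_pos n with rfl | hnpos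
        · simp at hn; rw [← hn] at hp; exact absurd hp hP.1
        · obtain ⟨m, rfl⟩ := Nat.exists_eq_add_of_lt hnpos
          refine ⟨m, ?_⟩
          have hpeq : p = (g⁻¹) ^ (m + 1) := by
            rw [inv_pow, eq_inv_iff_mul_eq_one]
            simpa [add_comm] using hn.symm
          rw [← hpeq]; exact hp
      · exact absurd (htf g (n + 1) (Nat.succ_ne_zero n) hn.symm) hg1
    · exfalso
      have hQcone : Cone Q := by
        refine ⟨h1Q, ?_⟩
        rintro a (⟨p, hp, n, rfl⟩ | ⟨n, rfl⟩) b (⟨q, hq, m, rfl⟩ | ⟨m, rfl⟩)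
        · refine Or.inl ⟨p * q, hP.2 _ hp _ hq, n + m, by rw [pow_add, mul_mul_mul_comm]⟩
        · refine Or.inl ⟨p, hp, n + (m + 1), by
            simp [pow_add, pow_succ, mul_comm, mul_assoc, mul_left_comm]⟩
        · refine Or.inl ⟨q, hq, (n + 1) + m, by
            simp [pow_add, pow_succ, mul_comm, mul_assoc, mul_left_comm]⟩
        · exact Or.inr ⟨n + m + 1, by rw [← pow_add]; ring_nf⟩
      have hsub : P ⊆ Q := fun p hp => Or.inl ⟨p, hp, 0, by simp⟩
      have := hPmax Q hQcone hsub
      rw [← this] at hgP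
      exact hgP (Or.inr ⟨0, by simp⟩)
  have htri : ∀ g : G, g ≠ 1 → g ∈ P ∨ g⁻¹ ∈ P := by
    intro g hg1
    by_contra hcon
    push_neg at hcon
    obtain ⟨n, hn⟩ := key g hg1 hcon.1
    obtain ⟨m, hm⟩ := key g⁻¹ (by simpa using hg1) hcon.2
    rw [inv_inv] at hm
    have h1 : ((g⁻¹) ^ (n + 1)) ^ (m + 1) ∈ P := hpow _ hn m
    have h2 : (g ^ (m + 1)) ^ (n + 1) ∈ P := hpow _ hm n
    have heq : ((g⁻¹) ^ (n + 1)) ^ (m + 1) * (g ^ (m + 1)) ^ (n + 1) = 1 := by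
      rw [← pow_mul, ← pow_mul, inv_pow, Nat.mul_comm, inv_mul_cancel]
    have hmem := hP.2 _ h1 _ h2
    rw [heq] at hmem
    exact hP.1 hmem
  refine ⟨fun a b => a⁻¹ * b ∈ P, { trichotomous := ?_, irrefl := ?_, trans := ?_ }, ?_, ?_⟩
  · intro a b
    refine tri_of_or ?_
    by_cases hab : a = b
    · exact Or.inr (Or.inl hab)
    · rcases htri (a⁻¹ * b) (by simp [hab, eq_comm, inv_mul_eq_one]) with h | h
      · exact Or.inl h
      · exact Or.inr (Or.inr (by simpa [mul_comm] using h))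
  · intro a; simpa using hP.1
  · intro a b c hab hbc
    simpa [mul_assoc] using hP.2 _ hab _ hbc
  · intro f a b hab
    have h : (f * a)⁻¹ * (f * b) = a⁻¹ * b := by group
    rwa [h]
  · intro f a b hab
    have h : (a * f)⁻¹ * (b * f) = a⁻¹ * b := by rw [mul_comm a f, mul_comm b f]; group
    rwa [h]

open Subgroup in
theorem BiOrderable.of_center {G : Type*} [Group G]
    (hZ : BiOrderable (center G)) (hQ : BiOrderable (G ⧸ center G)) : BiOrderable G := by
  obtain ⟨rZ, hZsto, hZl, hZr⟩ := hZ
  obtain ⟨rQ, hQsto, hQl, hQr⟩ := hQ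
  set π : G →* G ⧸ center G := QuotientGroup.mk' (center G) with hπ
  have hmem : ∀ a b : G, π a = π b ↔ a⁻¹ * b ∈ center G := fun a b => QuotientGroup.eq
  -- helper facts about rZ
  have hZ1mul : ∀ x y : center G, rZ 1 x → rZ 1 y → rZ 1 (x * y) := by
    intro x y hx hy
    exact hZsto.trans _ _ _ hx (by simpa using hZl x 1 y hy)
  have hZinv : ∀ x : center G, rZ x 1 → rZ 1 x⁻¹ := by
    intro x hx
    simpa using hZl x⁻¹ x 1 hx
  refine ⟨fun a b => rQ (π a) (π b) ∨ ∃ h : a⁻¹ * b ∈ center G, rZ 1 ⟨a⁻¹ * b, h⟩,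
    { trichotomous := ?_, irrefl := ?_, trans := ?_ }, ?_, ?_⟩
  · intro a b
    refine tri_of_or ?_
    rcases or_of_tri hQsto.trichotomous (π a) (π b) with h | h | h
    · exact Or.inl (Or.inl h)
    · by_cases hab : a = b
      · exact Or.inr (Or.inl hab)
      · have hc : a⁻¹ * b ∈ center G := (hmem a b).1 h
        have hc' : b⁻¹ * a ∈ center G := (hmem b a).1 h.symm
        have hne : (⟨a⁻¹ * b, hc⟩ : center G) ≠ 1 := by
          intro hcon
          apply hab
          have : a⁻¹ * b = 1 := congrArg Subtype.val hcon
          rw [inv_mul_eq_one] at this; exact this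
        rcases or_of_tri hZsto.trichotomous 1 ⟨a⁻¹ * b, hc⟩ with h1 | h1 | h1
        · exact Or.inl (Or.inr ⟨hc, h1⟩)
        · exact absurd h1.symm hne
        · refine Or.inr (Or.inr (Or.inr ⟨hc', ?_⟩))
          have := hZinv _ h1
          convert this using 2
          simp [mul_inv_rev]
    · exact Or.inr (Or.inr (Or.inl h))
  · rintro a (h | ⟨hc, h⟩)
    · exact hQsto.irrefl _ h
    · have : (⟨a⁻¹ * a, hc⟩ : center G) = 1 := by ext; simp
      rw [this] at h
      exact hZsto.irrefl _ h
  · rintro a b c (hab | ⟨hc1, hab⟩) (hbc | ⟨hc2, hbc⟩)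
    · exact Or.inl (hQsto.trans _ _ _ hab hbc)
    · refine Or.inl ?_
      rwa [(hmem b c).2 hc2] at hab
    · refine Or.inl ?_
      rwa [← (hmem a b).2 hc1] at hbc
    · refine Or.inr ⟨?_, ?_⟩
      · have := mul_mem hc1 hc2
        simpa [mul_assoc] using this
      · have := hZ1mul _ _ hab hbc
        convert this using 2
        simp [mul_assoc]
  · rintro f a b (h | ⟨hc, h⟩)
    · exact Or.inl (by simpa [map_mul] using hQl (π f) (π a) (π b) h)
    · refine Or.inr ⟨?_, ?_⟩
      · have he : (f * a)⁻¹ * (f * b) = a⁻¹ * b := by group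
        rw [he]; exact hc
      · convert h using 2
        group
  · rintro f a b (h | ⟨hc, h⟩)
    · exact Or.inl (by simpa [map_mul] using hQr (π f) (π a) (π b) h)
    · refine Or.inr ⟨?_, ?_⟩
      · have he : (a * f)⁻¹ * (b * f) = f⁻¹ * (a⁻¹ * b) * f := by group
        rw [he]
        simpa using Subgroup.Normal.conj_mem inferInstance _ hc f⁻¹
      · have he : (a * f)⁻¹ * (b * f) = a⁻¹ * b := by
          calc (a * f)⁻¹ * (b * f) = f⁻¹ * (a⁻¹ * b) * f := by group
          _ = f⁻¹ * f * (a⁻¹ * b) := by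
              rw [mul_assoc f⁻¹, ← Subgroup.mem_center_iff.mp hc f, mul_assoc]
          _ = a⁻¹ * b := by group
        convert h using 2

open Subgroup in
theorem malcev_step {G : Type*} [Group G]
    (hZ : ∀ x ∈ center G, ∀ m : ℕ, m ≠ 0 → x ^ m = 1 → x = 1)
    (x : G) (hcomm : ∀ g : G, x⁻¹ * (g⁻¹ * x * g) ∈ center G)
    (n : ℕ) (hn : n ≠ 0) (hxn : x ^ n ∈ center G) : x ∈ center G := by
  rw [Subgroup.mem_center_iff]
  intro g
  set c : G := x⁻¹ * (g⁻¹ * x * g) with hc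
  have hcZ : c ∈ center G := hcomm g
  have hconj : g⁻¹ * x * g = x * c := by rw [hc]; group
  have hcommute : Commute x c := (Subgroup.mem_center_iff.mp hcZ) x
  have h1 : g⁻¹ * x ^ n * g = (g⁻¹ * x * g) ^ n := by
    have := conj_pow (i := n) (a := g⁻¹) (b := x)
    rw [inv_inv] at this
    exact this.symm
  have h2 : g⁻¹ * x ^ n * g = x ^ n := by
    have := (Subgroup.mem_center_iff.mp hxn) g⁻¹
    calc g⁻¹ * x ^ n * g = g⁻¹ * (x ^ n * g) := by rw [mul_assoc]
    _ = g⁻¹ * (g * x ^ n) := by rw [(Subgroup.mem_center_iff.mp hxn) g]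
    _ = x ^ n := by group
  have h3 : (x * c) ^ n = x ^ n * c ^ n := hcommute.mul_pow n
  have h4 : x ^ n * c ^ n = x ^ n := by rw [← h3, ← hconj, ← h1, h2]
  have h5 : c ^ n = 1 :=
    mul_left_cancel (by rw [h4, mul_one] : x ^ n * c ^ n = x ^ n * 1)
  have h6 : c = 1 := hZ c hcZ n hn h5
  have : g⁻¹ * x * g = x := by rw [hconj, h6, mul_one]
  have h8 : g * (g⁻¹ * x * g) = g * x := congrArg (g * ·) this
  rw [← h8]
  group

open Subgroup in
theorem biOrderable_of_ucs (n : ℕ) : ∀ {G : Type u} [Group G],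
    Subgroup.upperCentralSeries G n = ⊤ →
    (∀ x ∈ center G, ∀ m : ℕ, m ≠ 0 → x ^ m = 1 → x = 1) → BiOrderable G := by
  induction n with
  | zero =>
    intro G _ htop _
    have hone : ∀ x : G, x = 1 := by
      intro x
      have : x ∈ Subgroup.upperCentralSeries G 0 := by rw [htop]; trivial
      simpa [Subgroup.upperCentralSeries_zero, Subgroup.mem_bot] using this
    refine ⟨fun _ _ => False, { trichotomous := ?_, irrefl := ?_, trans := ?_ }, ?_, ?_⟩
    · intro a b; refine tri_of_or ?_; exact Or.inr (Or.inl ((hone a).trans (hone b).symm))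
    · intro a h; exact h
    · intro a b c h; exact absurd h id
    · intro a b c h; exact h
    · intro a b c h; exact h
  | succ n ih =>
    intro G _ htop htf
    set H := G ⧸ center G with hH
    have hcomap := Subgroup.comap_upperCentralSeries_quotient_center (G := G) n
    have hHtop : Subgroup.upperCentralSeries H n = ⊤ := by
      rw [eq_top_iff]
      rintro x -
      obtain ⟨g, rfl⟩ := QuotientGroup.mk_surjective x
      have hg : g ∈ comap (QuotientGroup.mk' (center G)) (Subgroup.upperCentralSeries H n) := by
        rw [hcomap, htop]; trivial
      exact hg
    have hHtf : ∀ x ∈ center H, ∀ m : ℕ, m ≠ 0 → x ^ m = 1 → x = 1 := by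
      intro x hx m hm hxm
      obtain ⟨g, rfl⟩ := QuotientGroup.mk_surjective x
      have hcomm : ∀ a : G, g⁻¹ * (a⁻¹ * g * a) ∈ center G := by
        intro a
        rw [← QuotientGroup.eq_one_iff]
        have hcx := Subgroup.mem_center_iff.mp hx (QuotientGroup.mk a)
        have : (QuotientGroup.mk (g⁻¹ * (a⁻¹ * g * a)) : H) =
            (QuotientGroup.mk g : H)⁻¹ *
              ((QuotientGroup.mk a : H)⁻¹ * QuotientGroup.mk g * QuotientGroup.mk a) := by
          rfl
        rw [this, mul_assoc, ← hcx]
        group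
      have hgm : g ^ m ∈ center G := by
        rw [← QuotientGroup.eq_one_iff]
        exact hxm
      have := malcev_step htf g hcomm m hm hgm
      exact (QuotientGroup.eq_one_iff g).mpr this
    have hQ : BiOrderable H := ih hHtop hHtf
    have hZ : BiOrderable (center G) := by
      open scoped IsMulCommutative in apply BiOrderable.of_comm_torsionFree
      intro z m hm hz
      ext
      exact htf z.1 z.2 m hm (congrArg Subtype.val hz)
    exact BiOrderable.of_center hZ hQ

/-- Every residually torsion-free nilpotent group is bi-orderable. -/
theorem biOrderable_of_residually_torsionFree_nilpotent {G : Type*} [Group G]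
    (h : ∀ g : G, g ≠ 1 → ∃ (K : Subgroup G) (hK : K.Normal), g ∉ K ∧
      @Group.IsNilpotent (G ⧸ K) (@QuotientGroup.Quotient.group G _ K hK) ∧
      (∀ x : G ⧸ K, x ≠ (@QuotientGroup.Quotient.group G _ K hK).one → ¬ @IsOfFinOrder (G ⧸ K)
        (@DivInvMonoid.toMonoid _
          (@Group.toDivInvMonoid _ (@QuotientGroup.Quotient.group G _ K hK))) x)) :
    BiOrderable G := by
  classical
  choose K hKnorm hKnotmem hKnil hKtf using fun (g : {x : G // x ≠ 1}) => h g.1 g.2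
  haveI : ∀ g : {x : G // x ≠ 1}, (K g).Normal := hKnorm
  have hbo : ∀ g : {x : G // x ≠ 1}, BiOrderable (G ⧸ K g) := by
    intro g
    haveI := hKnil g
    obtain ⟨n, hn⟩ := Group.IsNilpotent.nilpotent (G ⧸ K g)
    refine biOrderable_of_ucs n hn ?_
    intro x _ m hm hxm
    by_contra hx1
    exact hKtf g x hx1 (isOfFinOrder_iff_pow_eq_one.mpr ⟨m, Nat.pos_of_ne_zero hm, hxm⟩)
  have hpi : BiOrderable (∀ g : {x : G // x ≠ 1}, G ⧸ K g) := BiOrderable.pi hbo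
  refine BiOrderable.comap (Pi.monoidHom fun g => QuotientGroup.mk' (K g)) ?_ hpi
  intro a b hab
  by_contra hne
  have hne' : a⁻¹ * b ≠ 1 := fun hcon => hne (by rwa [inv_mul_eq_one] at hcon)
  set i : {x : G // x ≠ 1} := ⟨a⁻¹ * b, hne'⟩ with hi
  have hcomp : QuotientGroup.mk' (K i) a = QuotientGroup.mk' (K i) b := congrFun hab i
  have : a⁻¹ * b ∈ K i := QuotientGroup.eq.mp hcomp
  exact hKnotmem i this
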